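/- arXiv:math/0607247 — 2 statements merged into one kernel-verified Lean document; each statement's English description precedes it below -/
import Mathlib

section
/- Let p = 5 or p = 7 and let k ≥ 4 be an even integer. For every θ with 0 < θ < π, the complex number F*_{k,p,2}(θ) := e^{ikθ/2} · E*_{k,p}(e^{iθ}/(2√p) − 1/2) is real, i.e. its imaginary part is zero. -/
open Complex

/-- The weight-`k` Eisenstein series for `SL₂(ℤ)`:
`E_k(z) = (1/2) ∑_{(c,d) coprime} (cz+d)^{-k}`. -/
noncomputable def Ek (k : ℕ) (z : ℂ) : ℂ :=
  (1 / 2) * ∑' q : {q : ℤ × ℤ // Int.gcd q.1 q.2 = 1},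
    (((q : ℤ × ℤ).1 : ℂ) * z + ((q : ℤ × ℤ).2 : ℂ)) ^ (-(k : ℤ))

/-- The Eisenstein series associated with the Fricke group `Γ₀*(p)`:
`E*_{k,p}(z) = (p^{k/2} E_k(pz) + E_k(z)) / (p^{k/2} + 1)`. -/
noncomputable def EkStar (k p : ℕ) (z : ℂ) : ℂ :=
  ((p : ℂ) ^ (k / 2) * Ek k ((p : ℂ) * z) + Ek k z) / ((p : ℂ) ^ (k / 2) + 1)

lemma gcd_lin (a b c d m n ε : ℤ) (hd : a*d - b*c = ε) (hε : ε*ε = 1)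
    (h : Int.gcd m n = 1) : Int.gcd (m*a+n*c) (m*b+n*d) = 1 := by
  rw [← Int.isCoprime_iff_gcd_eq_one] at h ⊢
  obtain ⟨s, t, h1⟩ := h
  exact ⟨ε*(s*d - t*b), ε*(t*a - s*c), by linear_combination (ε*(s*m+t*n))*hd + (s*m+t*n)*hε + h1⟩

def coprimeEquiv (a b c d ε : ℤ) (hd : a*d - b*c = ε) (hε : ε*ε = 1) :
    {q : ℤ × ℤ // Int.gcd q.1 q.2 = 1} ≃ {q : ℤ × ℤ // Int.gcd q.1 q.2 = 1} where
  toFun q := ⟨(q.1.1*a + q.1.2*c, q.1.1*b + q.1.2*d), gcd_lin a b c d _ _ ε hd hε q.2⟩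
  invFun q := ⟨(q.1.1*(ε*d) + q.1.2*(-(ε*c)), q.1.1*(-(ε*b)) + q.1.2*(ε*a)),
    gcd_lin (ε*d) (-(ε*b)) (-(ε*c)) (ε*a) _ _ ε (by linear_combination (a*d - b*c)*hε + hd) hε q.2⟩
  left_inv q := by
    ext
    · show (q.1.1*a + q.1.2*c)*(ε*d) + (q.1.1*b + q.1.2*d)*(-(ε*c)) = q.1.1
      linear_combination ε*q.1.1*hd + q.1.1*hε
    · show (q.1.1*a + q.1.2*c)*(-(ε*b)) + (q.1.1*b + q.1.2*d)*(ε*a) = q.1.2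
      linear_combination ε*q.1.2*hd + q.1.2*hε
  right_inv q := by
    ext
    · show (q.1.1*(ε*d) + q.1.2*(-(ε*c)))*a + (q.1.1*(-(ε*b)) + q.1.2*(ε*a))*c = q.1.1
      linear_combination ε*q.1.1*hd + q.1.1*hε
    · show (q.1.1*(ε*d) + q.1.2*(-(ε*c)))*b + (q.1.1*(-(ε*b)) + q.1.2*(ε*a))*d = q.1.2
      linear_combination ε*q.1.2*hd + q.1.2*hε

lemma Ek_slash (k : ℕ) (a b c d ε : ℤ) (hd : a*d - b*c = ε) (hε : ε*ε = 1) (z : ℂ)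
    (hz : (c:ℂ)*z + (d:ℂ) ≠ 0) :
    Ek k (((a:ℂ)*z + (b:ℂ))/((c:ℂ)*z + (d:ℂ))) = ((c:ℂ)*z + (d:ℂ))^(k:ℤ) * Ek k z := by
  unfold Ek
  have h2 : ∀ q : {q : ℤ × ℤ // Int.gcd q.1 q.2 = 1},
      (((q : ℤ × ℤ).1 : ℂ) * (((a:ℂ)*z + (b:ℂ))/((c:ℂ)*z + (d:ℂ))) + ((q : ℤ × ℤ).2 : ℂ)) ^ (-(k : ℤ))
      = ((c:ℂ)*z + (d:ℂ))^(k:ℤ) *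
        ((((coprimeEquiv a b c d ε hd hε q : {q : ℤ × ℤ // Int.gcd q.1 q.2 = 1}) : ℤ × ℤ).1 : ℂ) * z
          + (((coprimeEquiv a b c d ε hd hε q : {q : ℤ × ℤ // Int.gcd q.1 q.2 = 1}) : ℤ × ℤ).2 : ℂ)) ^ (-(k : ℤ)) := by
    rintro ⟨⟨m, n⟩, hmn⟩
    show ((m:ℂ) * _ + (n:ℂ)) ^ (-(k:ℤ)) = _ * (((m*a+n*c : ℤ):ℂ) * z + ((m*b+n*d : ℤ):ℂ)) ^ (-(k:ℤ))
    push_cast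
    have key : (m:ℂ) * (((a:ℂ)*z + b)/((c:ℂ)*z + d)) + n
        = (((m:ℂ)*a+(n:ℂ)*c) * z + ((m:ℂ)*b+(n:ℂ)*d)) / ((c:ℂ)*z + d) := by
      rw [mul_div_assoc', div_add' _ _ _ hz]
      ring
    rw [key, div_zpow, zpow_neg, zpow_neg, div_eq_mul_inv, inv_inv, mul_comm]
  rw [tsum_congr h2, tsum_mul_left, ← (coprimeEquiv a b c d ε hd hε).tsum_eq
    (fun q => (((q : ℤ × ℤ).1 : ℂ) * z + ((q : ℤ × ℤ).2 : ℂ)) ^ (-(k : ℤ)))]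
  ring

lemma Ek_conj (k : ℕ) (z : ℂ) : Ek k ((starRingEnd ℂ) z) = (starRingEnd ℂ) (Ek k z) := by
  unfold Ek
  rw [map_mul]
  congr 1
  · simp [map_ofNat]
  conv_rhs => rw [starRingEnd_apply, tsum_star]
  apply tsum_congr
  intro q
  rw [← starRingEnd_apply, map_zpow₀, map_add, map_mul]
  norm_num

theorem stmt1 (p : ℕ) (hp : p = 5 ∨ p = 7) (k : ℕ) (hk : 4 ≤ k) (hke : Even k)
    (θ : ℝ) (hθ1 : 0 < θ) (hθ2 : θ < Real.pi) :
    (Complex.exp (I * k * θ / 2) *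
      EkStar k p (Complex.exp (I * θ) / (2 * (Real.sqrt p : ℂ)) - 1/2)).im = 0 := by
  rw [← Complex.conj_eq_iff_im]
  set s : ℂ := (Real.sqrt p : ℂ) with hsdef
  set u : ℂ := Complex.exp (I * θ) with hudef
  set z : ℂ := u / (2 * s) - 1/2 with hzdef
  have hp0 : (0:ℝ) < p := by rcases hp with h | h <;> simp [h] <;> norm_num
  have hpc0 : (p:ℂ) ≠ 0 := by
    simp only [ne_eq, Nat.cast_eq_zero]
    omega
  have hs2 : s * s = (p:ℂ) := by
    rw [hsdef, ← Complex.ofReal_mul, Real.mul_self_sqrt hp0.le]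
    norm_cast
  have hs0 : s ≠ 0 := by
    intro h
    rw [h, mul_zero] at hs2
    exact hpc0 hs2.symm
  have hu0 : u ≠ 0 := Complex.exp_ne_zero _
  obtain ⟨m, hm⟩ : ∃ m : ℕ, p = 2*m+1 := by rcases hp with h | h <;> subst h <;> [exact ⟨2, by omega⟩; exact ⟨3, by omega⟩]
  obtain ⟨h, hh⟩ : ∃ h, k = h + h := hke
  have hk2 : k / 2 = h := by omega
  have hpm : (p:ℂ) = 2*(m:ℂ)+1 := by rw [hm]; push_cast; ring
  set P : ℂ := (p:ℂ)^(k/2) with hPdef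
  have hP0 : P ≠ 0 := pow_ne_zero _ hpc0
  have hcu : (starRingEnd ℂ) u = u⁻¹ := by
    rw [hudef, ← Complex.exp_conj, map_mul, Complex.conj_I, Complex.conj_ofReal,
      show (-I)*(θ:ℂ) = -(I*θ) by ring, Complex.exp_neg]
  have hcz : (starRingEnd ℂ) z = u⁻¹ / (2*s) - 1/2 := by
    rw [hzdef, map_sub, map_div₀, hcu, map_mul, Complex.conj_ofReal, map_ofNat, map_div₀,
      map_one, map_ofNat]
  have hzz : (2:ℂ)*z + 1 = u/s := by
    rw [hzdef]; field_simp; ring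
  have hz1 : (2:ℂ)*z + 1 ≠ 0 := by rw [hzz]; exact div_ne_zero hu0 hs0
  -- key identity 1 : p * conj z = (-p z - m)/(2z+1)
  have key1 : (-(p:ℂ)*z + -(m:ℂ))/(2*z + 1) = (p:ℂ) * ((starRingEnd ℂ) z) := by
    rw [hcz, hzz, hzdef, hpm]
    field_simp
    linear_combination hs2 + hpm
  have key2 : (-(1:ℂ)*((p:ℂ)*z) + -(m:ℂ))/(2*((p:ℂ)*z) + (p:ℂ)) = (starRingEnd ℂ) z := by
    rw [show (-(1:ℂ)*((p:ℂ)*z) + -(m:ℂ)) = (-(p:ℂ)*z + -(m:ℂ)) by ring,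
      show (2:ℂ)*((p:ℂ)*z) + (p:ℂ) = (p:ℂ)*(2*z+1) by ring,
      div_mul_eq_div_div_swap, key1]
    exact mul_div_cancel_left₀ _ hpc0
  have hz2 : (2:ℂ)*((p:ℂ)*z) + (p:ℂ) ≠ 0 := by
    have : (2:ℂ)*((p:ℂ)*z) + (p:ℂ) = (p:ℂ) * (2*z+1) := by ring
    rw [this]; exact mul_ne_zero hpc0 hz1
  -- Eisenstein transformation laws
  have E1 : Ek k ((p:ℂ) * ((starRingEnd ℂ) z)) = ((2:ℂ)*z + 1)^(k:ℤ) * Ek k z := by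
    have := Ek_slash k (-(p:ℤ)) (-(m:ℤ)) 2 1 (-1) (by omega) (by norm_num) z
      (by push_cast; simpa using hz1)
    push_cast at this
    rw [← key1]
    simpa using this
  have E2 : Ek k ((starRingEnd ℂ) z) = ((2:ℂ)*((p:ℂ)*z) + (p:ℂ))^(k:ℤ) * Ek k ((p:ℂ)*z) := by
    have := Ek_slash k (-1) (-(m:ℤ)) 2 (p:ℤ) (-1) (by omega) (by norm_num) ((p:ℂ)*z)
      (by push_cast; simpa using hz2)
    push_cast at this
    rw [← key2]
    simpa using this
  -- power bookkeeping
  have hsP : s^k = P := by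
    rw [hPdef, hk2, hh, pow_add, ← mul_pow, hs2]
  have hpk : (p:ℂ)^k = P * P := by
    rw [hPdef, hk2, hh, pow_add]
  have h1 : ((2:ℂ)*z + 1)^(k:ℤ) = u^k / P := by
    rw [zpow_natCast, hzz, div_pow, hsP]
  have h2 : ((2:ℂ)*((p:ℂ)*z) + (p:ℂ))^(k:ℤ) = P * u^k := by
    rw [zpow_natCast, show (2:ℂ)*((p:ℂ)*z) + (p:ℂ) = (p:ℂ)*(2*z+1) by ring, mul_pow, hzz,
      div_pow, hsP, hpk]
    field_simp
  have huk : u^k = Complex.exp (I*(k:ℂ)*(θ:ℂ)) := by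
    rw [hudef, ← Complex.exp_nat_mul]
    ring_nf
  -- conjugate of the exponential prefactor
  have hcE : (starRingEnd ℂ) (Complex.exp (I*(k:ℂ)*(θ:ℂ)/2)) = Complex.exp (-(I*(k:ℂ)*(θ:ℂ)/2)) := by
    rw [← Complex.exp_conj, map_div₀, map_mul, map_mul, Complex.conj_I, Complex.conj_ofReal,
      map_natCast, map_ofNat]
    ring_nf
  have hEE : Complex.exp (-(I*(k:ℂ)*(θ:ℂ)/2)) * u^k = Complex.exp (I*(k:ℂ)*(θ:ℂ)/2) := by
    rw [huk, ← Complex.exp_add]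
    ring_nf
  -- main computation
  rw [map_mul, hcE]
  unfold EkStar
  rw [map_div₀, map_add, map_mul, map_add, map_one, ← Ek_conj, ← Ek_conj, map_mul,
    Complex.conj_natCast, map_pow, Complex.conj_natCast]
  rw [E1, E2, ← hPdef, h1, h2]
  have h3 : P * (u ^ k / P * Ek k z) + P * u ^ k * Ek k ((p:ℂ)*z)
      = u ^ k * (P * Ek k ((p:ℂ)*z) + Ek k z) := by
    field_simp
    ring
  rw [h3, ← mul_div_assoc, ← mul_div_assoc, ← mul_assoc, hEE]
end

section
/- Let k ≥ 4 be an even integer and let α₅ := arctan 2. If 4 ∣ k, then e^{ik(π/2+α₅)/2}·E*_{k,5}(−2/5 + i/5) = (2·5^{k/2}/(5^{k/2}+1))·cos(k(π/2+α₅)/2)·E_k(i), and moreover E_k(i) is a positive real number. If k ≡ 2 (mod 4), then E*_{k,5}(−2/5 + i/5) = 0. -/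
open Complex

abbrev Qc := {q : ℤ × ℤ // Int.gcd q.1 q.2 = 1}

lemma gcd_transform (a b c d m n : ℤ) (h : a*d - b*c = 1) (hmn : Int.gcd m n = 1) :
    Int.gcd (a*m + c*n) (b*m + d*n) = 1 := by
  rw [← Int.isCoprime_iff_gcd_eq_one] at hmn ⊢
  obtain ⟨u, v, huv⟩ := hmn
  exact ⟨u*d - v*b, v*a - u*c, by linear_combination (u*m + v*n) * h + huv⟩

def matEquiv (a b c d : ℤ) (h : a*d - b*c = 1) : Qc ≃ Qc where
  toFun q := ⟨(a*q.1.1 + c*q.1.2, b*q.1.1 + d*q.1.2), gcd_transform a b c d _ _ h q.2⟩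
  invFun q := ⟨(d*q.1.1 + (-c)*q.1.2, (-b)*q.1.1 + a*q.1.2),
    gcd_transform d (-b) (-c) a _ _ (by linear_combination h) q.2⟩
  left_inv q := Subtype.ext (Prod.ext (by push_cast; linear_combination q.1.1 * h)
    (by push_cast; linear_combination q.1.2 * h))
  right_inv q := Subtype.ext (Prod.ext (by push_cast; linear_combination q.1.1 * h)
    (by push_cast; linear_combination q.1.2 * h))

lemma Ek_transform (k : ℕ) (a b c d : ℤ) (h : a*d - b*c = 1) (z : ℂ)
    (hz : (c:ℂ)*z + d ≠ 0) :
    Ek k (((a:ℂ)*z + b)/((c:ℂ)*z + d)) = ((c:ℂ)*z + d)^(k:ℤ) * Ek k z := by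
  set e := matEquiv a b c d h
  set f : Qc → ℂ := fun q => ((q.1.1:ℂ) * z + (q.1.2:ℂ)) ^ (-(k:ℤ)) with hf
  have key : ∀ q : Qc,
      ((q.1.1:ℂ) * (((a:ℂ)*z + b)/((c:ℂ)*z + d)) + (q.1.2:ℂ)) ^ (-(k:ℤ))
        = ((c:ℂ)*z + d)^(k:ℤ) * f (e q) := by
    rintro ⟨⟨m, n⟩, hq⟩
    have harg : ((m:ℂ) * (((a:ℂ)*z + b)/((c:ℂ)*z + d)) + (n:ℂ))
        = (((a*m + c*n : ℤ):ℂ) * z + ((b*m + d*n : ℤ):ℂ))/((c:ℂ)*z + d) := by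
      have hQ : ((a:ℂ)*z+b)/((c:ℂ)*z+d) * ((c:ℂ)*z+d) = (a:ℂ)*z+b := div_mul_cancel₀ _ hz
      rw [eq_div_iff hz]
      push_cast
      linear_combination (m:ℂ) * hQ
    have hcomp : f (e ⟨(m, n), hq⟩)
        = (((a*m + c*n : ℤ):ℂ) * z + ((b*m + d*n : ℤ):ℂ)) ^ (-(k:ℤ)) := rfl
    rw [harg, div_zpow, hcomp, zpow_neg ((c:ℂ)*z+d), div_eq_mul_inv, inv_inv, mul_comm]
  unfold Ek
  rw [tsum_congr key, tsum_mul_left, e.tsum_eq f]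
  ring

lemma hI2 : (1:ℂ)*I + (2:ℤ) ≠ 0 := by
  intro h
  have := congrArg Complex.re h
  simp at this

lemma Ek_five_rho (k : ℕ) : Ek k ((5:ℂ) * (-2/5 + I/5)) = Ek k I := by
  have h := Ek_transform k 1 (-2) 0 1 (by norm_num) I (by norm_num)
  have harg : (((1:ℤ):ℂ)*I + ((-2:ℤ):ℂ))/(((0:ℤ):ℂ)*I + ((1:ℤ):ℂ)) = (5:ℂ) * (-2/5 + I/5) := by
    push_cast; ring
  rw [harg] at h
  rw [h]
  norm_num

lemma Ek_rho (k : ℕ) : Ek k (-2/5 + I/5) = (2 + I)^(k:ℤ) * Ek k I := by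
  have h := Ek_transform k 0 (-1) 1 2 (by norm_num) I (by exact_mod_cast hI2)
  have harg : (((0:ℤ):ℂ)*I + ((-1:ℤ):ℂ))/(((1:ℤ):ℂ)*I + ((2:ℤ):ℂ)) = (-2/5 + I/5) := by
    rw [div_eq_iff (by exact_mod_cast hI2)]
    push_cast
    linear_combination (-1/5 : ℂ) * Complex.I_sq
  rw [harg] at h
  rw [show ((1:ℤ):ℂ)*I + ((2:ℤ):ℂ) = 2 + I by push_cast; ring] at h
  exact h

lemma Ek_S (k : ℕ) : Ek k I = I^(k:ℤ) * Ek k I := by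
  have h := Ek_transform k 0 (-1) 1 0 (by norm_num) I (by simp [I_ne_zero])
  have harg : (((0:ℤ):ℂ)*I + ((-1:ℤ):ℂ))/(((1:ℤ):ℂ)*I + ((0:ℤ):ℂ)) = I := by
    rw [div_eq_iff (by simp [I_ne_zero])]
    push_cast
    linear_combination (-1:ℂ) * Complex.I_sq
  rw [harg] at h
  rw [show ((1:ℤ):ℂ)*I + ((0:ℤ):ℂ) = I by push_cast; ring] at h
  exact h

lemma Ek_I_zero (k : ℕ) (hk2 : k % 4 = 2) : Ek k I = 0 := by
  have h := Ek_S k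
  have hIk : I^(k:ℤ) = -1 := by
    obtain ⟨j, hj⟩ : ∃ j, k = 4*j + 2 := ⟨k/4, by omega⟩
    subst hj
    rw [zpow_natCast, pow_add, pow_mul]
    norm_num [Complex.I_sq]
  rw [hIk] at h
  have h2 : (2:ℂ) * Ek k I = 0 := by linear_combination h
  simpa using h2

lemma sqrt5_sq : ((Real.sqrt 5 : ℝ):ℂ)^2 = 5 := by
  rw [← ofReal_pow, Real.sq_sqrt (by norm_num : (5:ℝ) ≥ 0)]
  norm_num

lemma two_add_I : (2 + I : ℂ)
    = ((Real.sqrt 5 : ℝ):ℂ) * Complex.exp (((Real.pi/2 - Real.arctan 2 : ℝ):ℂ) * I) := by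
  have h5 : (0:ℝ) < Real.sqrt 5 := Real.sqrt_pos.2 (by norm_num)
  rw [Complex.exp_mul_I, ← Complex.ofReal_cos, ← Complex.ofReal_sin,
    Real.cos_pi_div_two_sub, Real.sin_pi_div_two_sub,
    Real.sin_arctan, Real.cos_arctan]
  have h45 : Real.sqrt (1 + (2:ℝ)^2) = Real.sqrt 5 := by norm_num
  rw [h45]
  have hne : ((Real.sqrt 5 : ℝ):ℂ) ≠ 0 := by
    simpa using h5.ne'
  push_cast
  field_simp

lemma scalar_id (k : ℕ) (hke : Even k) :
    Complex.exp (I * k * (Real.pi / 2 + Real.arctan 2) / 2) *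
      ((5:ℂ)^(k/2) + (2 + I)^(k:ℤ)) =
    2 * (5:ℂ)^(k/2) * (Real.cos ((k : ℝ) * (Real.pi / 2 + Real.arctan 2) / 2) : ℂ) := by
  obtain ⟨m, hm⟩ := hke
  have hk2 : k = 2*m := by omega
  have hkd : k/2 = m := by omega
  subst hk2
  rw [hkd]
  have hpow : (2 + I : ℂ)^((2*m : ℕ):ℤ)
      = (5:ℂ)^m * Complex.exp ((2*m : ℕ) * (((Real.pi/2 - Real.arctan 2 : ℝ):ℂ) * I)) := by
    rw [zpow_natCast, two_add_I, mul_pow, ← Complex.exp_nat_mul, pow_mul, sqrt5_sq]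
  rw [hpow]
  set r : ℝ := ((2*m : ℕ):ℝ) * (Real.pi/2 + Real.arctan 2) / 2 with hr
  have h2cos : ((Real.cos r : ℝ):ℂ)
      = (Complex.exp ((r:ℂ)*I) + Complex.exp (-(r:ℂ)*I))/2 := by
    rw [Complex.ofReal_cos]; rfl
  have e1 : Complex.exp (I * ((2*m : ℕ):ℂ) * ((Real.pi:ℂ) / 2 + (Real.arctan 2 : ℂ)) / 2)
      = Complex.exp ((r:ℂ)*I) := by
    congr 1
    rw [hr]
    push_cast
    ring
  have e2 : Complex.exp (I * ((2*m : ℕ):ℂ) * ((Real.pi:ℂ) / 2 + (Real.arctan 2 : ℂ)) / 2) *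
      Complex.exp ((2*m : ℕ) * (((Real.pi/2 - Real.arctan 2 : ℝ):ℂ) * I))
      = Complex.exp (-(r:ℂ)*I) := by
    rw [← Complex.exp_add]
    have harg : I * ((2*m : ℕ):ℂ) * ((Real.pi:ℂ) / 2 + (Real.arctan 2 : ℂ)) / 2 +
        ((2*m : ℕ):ℂ) * (((Real.pi/2 - Real.arctan 2 : ℝ):ℂ) * I)
        = (m:ℂ) * (2 * (Real.pi:ℂ) * I) + (-(r:ℂ)*I) := by
      rw [hr]; push_cast; ring
    rw [harg, Complex.exp_add, Complex.exp_nat_mul_two_pi_mul_I, one_mul]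
  linear_combination (5:ℂ)^m * e1 + (5:ℂ)^m * e2 - 2*(5:ℂ)^m * h2cos

def negFst : Qc ≃ Qc where
  toFun q := ⟨(-q.1.1, q.1.2), by
    have := q.2; simpa [Int.gcd] using this⟩
  invFun q := ⟨(-q.1.1, q.1.2), by
    have := q.2; simpa [Int.gcd] using this⟩
  left_inv q := Subtype.ext (Prod.ext (by simp) (by simp))
  right_inv q := Subtype.ext (Prod.ext (by simp) (by simp))

lemma Ek_I_im (k : ℕ) : (Ek k I).im = 0 := by
  set f : Qc → ℂ := fun q => ((q.1.1:ℂ) * I + (q.1.2:ℂ)) ^ (-(k:ℤ)) with hf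
  have key : ∀ q : Qc, f (negFst q) = star (f q) := by
    rintro ⟨⟨m, n⟩, hq⟩
    show (((-m : ℤ):ℂ) * I + (n:ℂ)) ^ (-(k:ℤ)) = star (((m:ℂ) * I + (n:ℂ)) ^ (-(k:ℤ)))
    rw [show star (((m:ℂ) * I + (n:ℂ)) ^ (-(k:ℤ)))
        = (star ((m:ℂ) * I + (n:ℂ))) ^ (-(k:ℤ)) from (map_zpow₀ (starRingEnd ℂ) _ _)]
    congr 1
    simp [Complex.star_def]
  have hsum : (∑' q : Qc, f q) = star (∑' q : Qc, f q) := by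
    conv_lhs => rw [← negFst.tsum_eq f]
    rw [tsum_congr key, ← tsum_star]
  have him : (∑' q : Qc, f q).im = 0 := by
    have := congrArg Complex.im hsum
    simp [Complex.star_def] at this
    linarith
  show ((1/2 : ℂ) * ∑' q : Qc, f q).im = 0
  simp [Complex.mul_im, him]

set_option maxHeartbeats 2000000 in
lemma Ek_I_pos (k : ℕ) (hk : 4 ≤ k) (hke : Even k) (h4 : 4 ∣ k) : 0 < (Ek k I).re := by
  obtain ⟨m, hm⟩ : ∃ m, k = 2*m := ⟨k/2, by omega⟩
  have hm2 : 2 ≤ m := by omega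
  set f : ℤ×ℤ → ℂ := fun p => ((p.1:ℂ) * I + (p.2:ℂ)) ^ (-(k:ℤ)) with hf
  set S : Set (ℤ×ℤ) := {p | Int.gcd p.1 p.2 = 1} with hSdef
  have hEk : Ek k I = (1/2 : ℂ) * ∑' p : S, f p := rfl
  set s : Finset (ℤ×ℤ) := {(0,1),(0,-1),(1,0),(-1,0)} with hsdef
  have hsubS : ↑s ⊆ S := by
    intro p hp
    simp only [hsdef, Finset.coe_insert, Set.mem_insert_iff, Finset.coe_singleton,
      Set.mem_singleton_iff] at hp
    rcases hp with h|h|h|h <;> subst h <;> simp [hSdef, Int.gcd]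
  set T : Set (ℤ×ℤ) := S \ ↑s with hTdef
  set g : ℤ → ℝ := fun n => 1/(2*(n:ℝ)^2) with hg
  have hgsum : Summable g := by
    have h0 : Summable (fun n : ℤ => 1/((n:ℝ)^2)) := Real.summable_one_div_int_pow.2 one_lt_two
    exact (h0.div_const 2).congr (fun n => by rw [hg]; ring)
  have hgnn : ∀ n : ℤ, 0 ≤ g n := fun n => by rw [hg]; positivity
  set G : ℤ×ℤ → ℝ := fun p => g p.1 * g p.2 with hG
  have hGsum : Summable G := hgsum.mul_of_nonneg hgsum hgnn hgnn
  have hGnn : ∀ p, 0 ≤ G p := fun p => mul_nonneg (hgnn _) (hgnn _)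
  -- pointwise bound off the axes
  have hbound : ∀ p : ℤ×ℤ, p.1 ≠ 0 → p.2 ≠ 0 → ‖f p‖ ≤ G p := by
    rintro ⟨c,d⟩ hc hd
    have hc1 : (1:ℝ) ≤ (c:ℝ)^2 := by
      have : (1:ℤ) ≤ c^2 := by rcases lt_or_gt_of_ne hc with h|h <;> nlinarith
      exact_mod_cast this
    have hd1 : (1:ℝ) ≤ (d:ℝ)^2 := by
      have : (1:ℤ) ≤ d^2 := by rcases lt_or_gt_of_ne hd with h|h <;> nlinarith
      exact_mod_cast this
    have hnorm : ‖f (c,d)‖ = (((c:ℝ)^2 + (d:ℝ)^2)^m)⁻¹ := by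
      show ‖((c:ℂ)*I + (d:ℂ)) ^ (-(k:ℤ))‖ = _
      rw [norm_zpow, zpow_neg, zpow_natCast]
      congr 1
      have habs : ‖(c:ℂ)*I + (d:ℂ)‖^2 = (c:ℝ)^2 + (d:ℝ)^2 := by
        rw [show (c:ℂ)*I + (d:ℂ) = ((d:ℝ):ℂ) + ((c:ℝ):ℂ)*I by push_cast; ring,
          Complex.sq_norm, Complex.normSq_add_mul_I]
        ring
      rw [hm, pow_mul, habs]
    rw [hnorm]
    have hGval : G (c,d) = (4*((c:ℝ)^2*(d:ℝ)^2))⁻¹ := by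
      show g c * g d = _
      rw [hg]
      simp only [one_div, ← mul_inv]
      congr 1
      ring
    rw [hGval]
    have h2 : (4:ℝ)*((c:ℝ)^2*(d:ℝ)^2) ≤ ((c:ℝ)^2+(d:ℝ)^2)^m := by
      calc (4:ℝ)*((c:ℝ)^2*(d:ℝ)^2) ≤ ((c:ℝ)^2+(d:ℝ)^2)^2 := by
            nlinarith [sq_nonneg ((c:ℝ)^2-(d:ℝ)^2)]
        _ ≤ ((c:ℝ)^2+(d:ℝ)^2)^m := pow_le_pow_right₀ (by nlinarith) hm2
    exact inv_anti₀ (by positivity) h2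
  have hTne : ∀ p : ℤ×ℤ, p ∈ T → p.1 ≠ 0 ∧ p.2 ≠ 0 := by
    rintro ⟨c,d⟩ ⟨hpS, hps⟩
    constructor
    · rintro rfl
      have : d.natAbs = 1 := by simpa [hSdef, Int.gcd] using hpS
      rcases Int.natAbs_eq_iff.1 this with h|h <;> subst h <;>
        exact hps (by simp [hsdef])
    · rintro rfl
      have : c.natAbs = 1 := by simpa [hSdef, Int.gcd] using hpS
      rcases Int.natAbs_eq_iff.1 this with h|h <;> subst h <;>
        exact hps (by simp [hsdef])
  have hGT : Summable (fun p : T => G p) := hGsum.subtype _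
  have hfT : Summable (fun p : T => ‖f p‖) :=
    Summable.of_nonneg_of_le (fun p => norm_nonneg _)
      (fun p => hbound p (hTne p p.2).1 (hTne p p.2).2) hGT
  have hfT' : Summable (fun p : T => f p) := hfT.of_norm
  have hfs : Summable (fun p : (↑s : Set (ℤ×ℤ)) => f p) := s.finite_toSet.summable f
  have hsplit : ∑' p : S, f p = (∑ p ∈ s, f p) + ∑' p : T, f p := by
    have hU : S = ↑s ∪ T := by rw [hTdef, Set.union_diff_cancel hsubS]
    rw [hU, Summable.tsum_union_disjoint (f := f) disjoint_sdiff_self_right hfs hfT',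
      s.tsum_subtype' f]
  obtain ⟨j, hj⟩ := h4
  have hI4 : (I:ℂ)^k = 1 := by rw [hj, pow_mul]; norm_num
  have hn1 : ((-1:ℂ))^k = 1 := by
    rw [hj, pow_mul]; norm_num
  have hsum4 : (∑ p ∈ s, f p) = 4 := by
    rw [hsdef]
    rw [Finset.sum_insert (by decide), Finset.sum_insert (by decide),
      Finset.sum_insert (by decide), Finset.sum_singleton]
    have e1 : f (0,1) = 1 := by simp [hf]
    have e2 : f (0,-1) = 1 := by
      show (((0:ℤ):ℂ)*I + ((-1:ℤ):ℂ)) ^ (-(k:ℤ)) = 1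
      push_cast
      rw [zero_mul, zero_add, zpow_neg, zpow_natCast, hn1, inv_one]
    have e3 : f (1,0) = 1 := by
      show (((1:ℤ):ℂ)*I + ((0:ℤ):ℂ)) ^ (-(k:ℤ)) = 1
      push_cast
      rw [one_mul, add_zero, zpow_neg, zpow_natCast, hI4, inv_one]
    have e4 : f (-1,0) = 1 := by
      show (((-1:ℤ):ℂ)*I + ((0:ℤ):ℂ)) ^ (-(k:ℤ)) = 1
      push_cast
      rw [add_zero, zpow_neg, zpow_natCast, neg_one_mul, neg_pow, hn1, hI4, one_mul, inv_one]
    rw [e1, e2, e3, e4]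
    norm_num
  -- tail bound
  set tg : ℝ := ∑' n : ℤ, g n with htg
  have htgnn : 0 ≤ tg := tsum_nonneg hgnn
  have htg74 : tg ≤ 7/4 := by
    have hnat : Summable (fun n : ℕ => g n) := hgsum.comp_injective Nat.cast_injective
    have hneg : Summable (fun n : ℕ => g (-(n+1))) :=
      hgsum.comp_injective (fun a b hab => by simpa using hab)
    have hval : ∑' n : ℕ, g n = Real.pi^2/12 := by
      have heq : (fun n : ℕ => g ((n : ℤ))) = fun n : ℕ => (1/(n:ℝ)^2)/2 :=
        funext fun n => by rw [hg]; push_cast; ring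
      have h2 : HasSum (fun n : ℕ => (1/(n:ℝ)^2)/2) (Real.pi^2/6/2) :=
        hasSum_zeta_two.div_const 2
      rw [heq, h2.tsum_eq]; ring
    have hvneg : ∑' n : ℕ, g (-(n+1)) ≤ Real.pi^2/12 := by
      rw [← hval]
      refine Summable.tsum_le_tsum_of_inj (fun n : ℕ => n+1) (fun a b h => by simpa using h)
        (fun c _ => hgnn c) (fun n => le_of_eq ?_) hneg hnat
      rw [hg]; push_cast; ring
    have hsplitZ : tg = (∑' n : ℕ, g n) + ∑' n : ℕ, g (-(n+1)) := by
      rw [htg]; exact tsum_of_nat_of_neg_add_one hnat hneg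
    have hpi : Real.pi < 3.15 := by
      have := Real.pi_lt_d6; linarith
    have hpi0 : 0 < Real.pi := Real.pi_pos
    rw [hsplitZ, hval]
    nlinarith
  have htail : ‖∑' p : T, f p‖ ≤ 49/16 := by
    have t1 := norm_tsum_le_tsum_norm hfT
    have t2 : ∑' p : T, ‖f p‖ ≤ ∑' p : T, G p :=
      Summable.tsum_le_tsum (fun p => hbound p (hTne p p.2).1 (hTne p p.2).2) hfT hGT
    have t3 : ∑' p : T, G p ≤ ∑' p : ℤ×ℤ, G p := by
      rw [tsum_subtype]
      exact Summable.tsum_le_tsum (fun p => Set.indicator_le_self' (fun x _ => hGnn x) p)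
        (hGsum.indicator T) hGsum
    have t4 : ∑' p : ℤ×ℤ, G p = tg * tg := by
      rw [Summable.tsum_prod' hGsum (fun c => hgsum.mul_left (g c))]
      calc ∑' (c : ℤ) (d : ℤ), g c * g d = ∑' c : ℤ, g c * tg :=
            tsum_congr fun c => tsum_mul_left
        _ = tg * tg := tsum_mul_right
    have t5 : tg * tg ≤ (7/4)*(7/4) := mul_le_mul htg74 htg74 htgnn (by norm_num)
    calc ‖∑' p : T, f p‖ ≤ ∑' p : T, ‖f p‖ := t1
      _ ≤ ∑' p : T, G p := t2
      _ ≤ ∑' p : ℤ×ℤ, G p := t3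
      _ = tg * tg := t4
      _ ≤ 49/16 := by linarith
  set ST : ℂ := ∑' p : T, f p with hST
  have hre : (Ek k I).re = (1/2) * (4 + ST.re) := by
    rw [hEk, hsplit, hsum4]
    have h4re : ((4:ℂ) + ST).re = 4 + ST.re := by simp
    rw [show ((1/2:ℂ) * ((4:ℂ) + ST)).re
        = (1/2 : ℝ) * ((4:ℂ) + ST).re - 0 * ((4:ℂ) + ST).im from by
      rw [Complex.mul_re]; norm_num, h4re]
    ring
  have habs := Complex.abs_re_le_norm ST
  rw [hre]
  have hstre : -(49/16 : ℝ) ≤ ST.re := by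
    have h1 : |ST.re| ≤ 49/16 := le_trans habs htail
    have h2 := abs_le.1 h1
    linarith [h2.1]
  linarith

theorem stmt7 (k : ℕ) (hk : 4 ≤ k) (hke : Even k) :
    (4 ∣ k →
      Complex.exp (I * k * (Real.pi / 2 + Real.arctan 2) / 2) *
          EkStar k 5 (-2/5 + I / 5) =
        (2 * (5 : ℂ) ^ (k / 2) / ((5 : ℂ) ^ (k / 2) + 1)) *
          (Real.cos ((k : ℝ) * (Real.pi / 2 + Real.arctan 2) / 2) : ℂ) * Ek k I ∧
      (Ek k I).im = 0 ∧ 0 < (Ek k I).re) ∧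
    (k % 4 = 2 → EkStar k 5 (-2/5 + I / 5) = 0) := by
  have hcast : ((5:ℕ):ℂ) = (5:ℂ) := by norm_num
  have hD : (5:ℂ)^(k/2) + 1 ≠ 0 := by
    intro h
    have h2 : ((5:ℝ)^(k/2) + 1 : ℝ) = 0 := by exact_mod_cast h
    have h3 : (0:ℝ) < (5:ℝ)^(k/2) + 1 := by positivity
    linarith
  constructor
  · intro h4
    refine ⟨?_, Ek_I_im k, Ek_I_pos k hk hke h4⟩
    have hs := scalar_id k hke
    rw [EkStar, hcast, Ek_five_rho k, Ek_rho k]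
    calc Complex.exp (I * k * (Real.pi / 2 + Real.arctan 2) / 2) *
          (((5:ℂ)^(k/2) * Ek k I + (2+I)^(k:ℤ) * Ek k I)/((5:ℂ)^(k/2)+1))
        = (Complex.exp (I * k * (Real.pi / 2 + Real.arctan 2) / 2) *
            ((5:ℂ)^(k/2) + (2+I)^(k:ℤ))) * Ek k I / ((5:ℂ)^(k/2)+1) := by ring
      _ = (2 * (5:ℂ)^(k/2) * (Real.cos ((k : ℝ) * (Real.pi / 2 + Real.arctan 2) / 2) : ℂ))
            * Ek k I / ((5:ℂ)^(k/2)+1) := by rw [hs]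
      _ = (2 * (5 : ℂ) ^ (k / 2) / ((5 : ℂ) ^ (k / 2) + 1)) *
          (Real.cos ((k : ℝ) * (Real.pi / 2 + Real.arctan 2) / 2) : ℂ) * Ek k I := by ring
  · intro hk2
    rw [EkStar, hcast, Ek_five_rho k, Ek_rho k, Ek_I_zero k hk2]
    simp
end
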